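/- For λ > 0, define Q : ℝ^{n×K} → ℝ by Q(F) = Σ_{i=1}^n ‖f_i − y_i‖² + λ Σ_{i,j=1}^n A_{ij} ‖f_i/√d_i − f_j/√d_j‖², where f_i denotes the i-th row of F and y_i denotes the i-th row of Y, and ‖·‖ is the Euclidean norm on ℝ^K. Then Q has a unique global minimizer, equal to (1/(1+2λ)) (I − αS)^{-1} Y with α := 2λ/(2λ+1). In particular, the minimizer is a positive scalar multiple of (I − αS)^{-1} Y, so its row-wise argmaxes coincide with those of (I − αS)^{-1} Y. -/

import Mathlib

open Matrix BigOperators Finset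

attribute [local instance] Classical.propDecidable

/-- Row sum `d_i = Σ_j A_{ij}` of the affinity matrix. -/
noncomputable def rowSum {n : ℕ} (A : Matrix (Fin n) (Fin n) ℝ) (i : Fin n) : ℝ :=
  ∑ j, A i j

/-- The normalized matrix `S = D^{-1/2} A D^{-1/2}`. -/
noncomputable def Smat {n : ℕ} (A : Matrix (Fin n) (Fin n) ℝ) : Matrix (Fin n) (Fin n) ℝ :=
  Matrix.diagonal (fun i => (Real.sqrt (rowSum A i))⁻¹) * A *
    Matrix.diagonal (fun i => (Real.sqrt (rowSum A i))⁻¹)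

/-- Label matrix `Y` (indices `i` with `(i : ℕ) < l` are the labeled ones). -/
noncomputable def Ymat {n K : ℕ} (l : ℕ) (y : Fin n → Fin K) : Matrix (Fin n) (Fin K) ℝ :=
  fun i c => if (i : ℕ) < l ∧ y i = c then 1 else 0

/-- `F* = (I - α S)^{-1} Y`. -/
noncomputable def Fstar {n K : ℕ} (l : ℕ) (y : Fin n → Fin K) (α : ℝ)
    (A : Matrix (Fin n) (Fin n) ℝ) : Matrix (Fin n) (Fin K) ℝ :=
  (1 - α • Smat A)⁻¹ * Ymat l y

/-- Instance `i` is correctly predicted: `F*_{i, y_i} > F*_{i, c}` for all `c ≠ y_i`. -/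
def CorrectlyPredicted {n K : ℕ} (l : ℕ) (y : Fin n → Fin K) (α : ℝ)
    (A : Matrix (Fin n) (Fin n) ℝ) (i : Fin n) : Prop :=
  ∀ c : Fin K, c ≠ y i → Fstar l y α A i c < Fstar l y α A i (y i)

/-- Accuracy on the unlabeled instances (those with `(i : ℕ) ≥ l`). -/
noncomputable def AccLP {n K : ℕ} (l : ℕ) (y : Fin n → Fin K) (α : ℝ)
    (A : Matrix (Fin n) (Fin n) ℝ) : ℝ :=
  ((Finset.univ.filter
      (fun i : Fin n => l ≤ (i : ℕ) ∧ CorrectlyPredicted l y α A i)).card : ℝ) /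
    ((n : ℝ) - (l : ℝ))

/-- `i` and `j` are connected w.r.t. `B`: a finite sequence of at least one step
with positive affinities joins them. -/
def Connected {n : ℕ} (B : Matrix (Fin n) (Fin n) ℝ) : Fin n → Fin n → Prop :=
  Relation.TransGen (fun i j => 0 < B i j)

/-- for `λ > 0`, the objective
`Q(F) = Σ_i ‖f_i - y_i‖² + λ Σ_{i,j} A_{ij} ‖f_i/√d_i - f_j/√d_j‖²`
has a unique global minimizer `(1/(1+2λ)) (I - αS)⁻¹ Y` with `α = 2λ/(2λ+1)`;
being a positive multiple of `(I - αS)⁻¹ Y`, its row-wise comparisons (hence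
argmaxes) coincide with those of `(I - αS)⁻¹ Y`. -/
lemma symmetrize_aux {n K : ℕ} (A : Matrix (Fin n) (Fin n) ℝ) (hAs : ∀ i j, A j i = A i j)
    (s : Fin n → ℝ) (hs : ∀ i, s i ≠ 0) (hss : ∀ i, s i * s i = ∑ j, A i j)
    (G P : Matrix (Fin n) (Fin K) ℝ) (S : Matrix (Fin n) (Fin n) ℝ)
    (hS : ∀ i j, S i j = (s i)⁻¹ * A i j * (s j)⁻¹) :
    ∑ i, ∑ j, A i j * ∑ c, 2*((G i c / s i - G j c / s j) * (P i c / s i - P j c / s j))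
      = ∑ i, ∑ c, 4*(G i c * (P i c - ∑ j, S i j * P j c)) := by
  have e1 : ∀ i j, A i j * ∑ c, 2*((G i c / s i - G j c / s j) * (P i c / s i - P j c / s j))
      = (A i j * ∑ c, 2*((G i c / s i)*(P i c / s i)) + A i j * ∑ c, 2*((G j c / s j)*(P j c / s j)))
        - (A i j * ∑ c, 2*((G i c / s i)*(P j c / s j)) + A i j * ∑ c, 2*((G j c / s j)*(P i c / s i))) := by
    intro i j
    rw [← mul_add, ← mul_add, ← mul_sub, ← Finset.sum_add_distrib, ← Finset.sum_add_distrib,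
      ← Finset.sum_sub_distrib]
    exact congrArg _ (Finset.sum_congr rfl fun c _ => by ring)
  simp only [e1, Finset.sum_add_distrib, Finset.sum_sub_distrib]
  have swap1 : ∑ i, ∑ j, A i j * ∑ c, 2*((G j c / s j)*(P j c / s j))
      = ∑ i, ∑ j, A i j * ∑ c, 2*((G i c / s i)*(P i c / s i)) := by
    rw [Finset.sum_comm]
    exact Finset.sum_congr rfl fun i _ => Finset.sum_congr rfl fun j _ => by rw [hAs]
  have swap2 : ∑ i, ∑ j, A i j * ∑ c, 2*((G j c / s j)*(P i c / s i))
      = ∑ i, ∑ j, A i j * ∑ c, 2*((G i c / s i)*(P j c / s j)) := by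
    rw [Finset.sum_comm]
    exact Finset.sum_congr rfl fun i _ => Finset.sum_congr rfl fun j _ => by rw [hAs]
  rw [swap1, swap2]
  have diag : ∑ i, ∑ j, A i j * ∑ c, 2*((G i c / s i)*(P i c / s i))
      = ∑ i, ∑ c, 2*(G i c * P i c) := by
    refine Finset.sum_congr rfl fun i _ => ?_
    rw [← Finset.sum_mul, ← hss i, Finset.mul_sum]
    refine Finset.sum_congr rfl fun c _ => ?_
    have := hs i
    field_simp
  have off : ∑ i, ∑ j, A i j * ∑ c, 2*((G i c / s i)*(P j c / s j))
      = ∑ i, ∑ c, 2*(G i c * ∑ j, S i j * P j c) := by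
    refine Finset.sum_congr rfl fun i _ => ?_
    calc ∑ j, A i j * ∑ c, 2*((G i c / s i)*(P j c / s j))
        = ∑ j, ∑ c, A i j * (2*((G i c / s i)*(P j c / s j))) := by
          simp only [Finset.mul_sum]
      _ = ∑ c, ∑ j, A i j * (2*((G i c / s i)*(P j c / s j))) := Finset.sum_comm
      _ = ∑ c, 2*(G i c * ∑ j, S i j * P j c) := by
          refine Finset.sum_congr rfl fun c _ => ?_
          simp only [Finset.mul_sum]
          refine Finset.sum_congr rfl fun j _ => ?_
          rw [hS, div_eq_mul_inv, div_eq_mul_inv]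
          ring
  rw [diag, off]
  rw [show ∀ (X Y : ℝ), (X + X) - (Y + Y) = 2*X - 2*Y from fun X Y => by ring]
  simp only [Finset.mul_sum]
  rw [← Finset.sum_sub_distrib]
  refine Finset.sum_congr rfl fun i _ => ?_
  rw [← Finset.sum_sub_distrib]
  refine Finset.sum_congr rfl fun c _ => ?_
  have h4 : 4*(G i c * (P i c - ∑ j, S i j * P j c))
      = 2*(2*(G i c * P i c)) - ∑ j, 2*(2*(G i c * (S i j * P j c))) := by
    have h5 : (4*G i c) * ∑ j, S i j * P j c = ∑ j, 2*(2*(G i c * (S i j * P j c))) := by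
      rw [Finset.mul_sum]
      exact Finset.sum_congr rfl fun j _ => by ring
    rw [← h5]
    ring
  rw [h4]


theorem lp_objective_minimizer
    {n K : ℕ} (l : ℕ) (hl : 0 < l) (hln : l < n) (hK : 0 < K)
    (y : Fin n → Fin K)
    (A : Matrix (Fin n) (Fin n) ℝ)
    (hsym : A.IsSymm) (hnonneg : ∀ i j, 0 ≤ A i j) (hdiag : ∀ i, A i i = 0)
    (hrow : ∀ i, 0 < rowSum A i)
    (lam : ℝ) (hlam : 0 < lam)
    (Q : Matrix (Fin n) (Fin K) ℝ → ℝ)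
    (hQ : ∀ F : Matrix (Fin n) (Fin K) ℝ,
      Q F = (∑ i, ∑ c, (F i c - Ymat l y i c) ^ 2) +
        lam * ∑ i, ∑ j, A i j *
          ∑ c, (F i c / Real.sqrt (rowSum A i) - F j c / Real.sqrt (rowSum A j)) ^ 2)
    (α : ℝ) (hαdef : α = 2 * lam / (2 * lam + 1))
    (F₀ : Matrix (Fin n) (Fin K) ℝ)
    (hF₀ : F₀ = (1 / (1 + 2 * lam)) • ((1 - α • Smat A)⁻¹ * Ymat l y)) :
    (∀ F : Matrix (Fin n) (Fin K) ℝ, F ≠ F₀ → Q F₀ < Q F) ∧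
      (∀ (i : Fin n) (c c' : Fin K),
        (F₀ i c < F₀ i c' ↔
          ((1 - α • Smat A)⁻¹ * Ymat l y) i c < ((1 - α • Smat A)⁻¹ * Ymat l y) i c')) := by
  have hs0 : ∀ i, 0 < Real.sqrt (rowSum A i) := fun i => Real.sqrt_pos.mpr (hrow i)
  have hsne : ∀ i, Real.sqrt (rowSum A i) ≠ 0 := fun i => (hs0 i).ne'
  have hss : ∀ i, Real.sqrt (rowSum A i) * Real.sqrt (rowSum A i) = rowSum A i :=
    fun i => Real.mul_self_sqrt (hrow i).le
  have hAs : ∀ i j, A j i = A i j := fun i j => hsym.apply i j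
  have hSapp : ∀ i j, Smat A i j
      = (Real.sqrt (rowSum A i))⁻¹ * A i j * (Real.sqrt (rowSum A j))⁻¹ := by
    intro i j
    simp [Smat, Matrix.mul_diagonal, Matrix.diagonal_mul]
  have hlam1 : (0:ℝ) < 2 * lam + 1 := by linarith
  have hα0 : 0 < α := by rw [hαdef]; positivity
  have hα1 : α < 1 := by rw [hαdef, div_lt_one hlam1]; linarith
  set M : Matrix (Fin n) (Fin n) ℝ := 1 - α • Smat A with hM_def
  -- quadratic form bound for S
  have hSbound : ∀ v : Fin n → ℝ,
      ∑ i, ∑ j, Smat A i j * (v i * v j) ≤ ∑ i, v i * v i := by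
    intro v
    have h1 : ∀ i j, 2 * (Smat A i j * (v i * v j)) ≤
        A i j * (v i / Real.sqrt (rowSum A i))^2 + A i j * (v j / Real.sqrt (rowSum A j))^2 := by
      intro i j
      rw [hSapp]
      have hprod : (Real.sqrt (rowSum A i))⁻¹ * A i j * (Real.sqrt (rowSum A j))⁻¹ * (v i * v j)
          = A i j * ((v i / Real.sqrt (rowSum A i)) * (v j / Real.sqrt (rowSum A j))) := by
        rw [div_eq_mul_inv, div_eq_mul_inv]; ring
      rw [hprod]
      have hxy : 2 * ((v i / Real.sqrt (rowSum A i)) * (v j / Real.sqrt (rowSum A j)))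
          ≤ (v i / Real.sqrt (rowSum A i))^2 + (v j / Real.sqrt (rowSum A j))^2 := by
        nlinarith [sq_nonneg (v i / Real.sqrt (rowSum A i) - v j / Real.sqrt (rowSum A j))]
      nlinarith [hnonneg i j, mul_le_mul_of_nonneg_left hxy (hnonneg i j)]
    have h2 : ∑ i, ∑ j, 2 * (Smat A i j * (v i * v j))
        ≤ ∑ i, ∑ j, (A i j * (v i / Real.sqrt (rowSum A i))^2
            + A i j * (v j / Real.sqrt (rowSum A j))^2) :=
      Finset.sum_le_sum fun i _ => Finset.sum_le_sum fun j _ => h1 i j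
    have h3 : ∑ i, ∑ j, (A i j * (v i / Real.sqrt (rowSum A i))^2
          + A i j * (v j / Real.sqrt (rowSum A j))^2)
        = 2 * ∑ i, v i * v i := by
      simp only [Finset.sum_add_distrib]
      have hsw : ∑ i, ∑ j, A i j * (v j / Real.sqrt (rowSum A j))^2
          = ∑ i, ∑ j, A i j * (v i / Real.sqrt (rowSum A i))^2 := by
        rw [Finset.sum_comm]
        exact Finset.sum_congr rfl fun i _ => Finset.sum_congr rfl fun j _ => by rw [hAs]
      rw [hsw]
      have hrowq : ∑ i, ∑ j, A i j * (v i / Real.sqrt (rowSum A i))^2 = ∑ i, v i * v i := by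
        refine Finset.sum_congr rfl fun i _ => ?_
        rw [← Finset.sum_mul]
        have : ∑ j, A i j = rowSum A i := rfl
        rw [this, ← hss i]
        have := hsne i
        field_simp
        rw [Real.sq_sqrt (sq_nonneg _)]; ring
      rw [hrowq]
      ring
    have h4 : ∑ i, ∑ j, 2 * (Smat A i j * (v i * v j))
        = 2 * ∑ i, ∑ j, Smat A i j * (v i * v j) := by
      rw [Finset.mul_sum]
      exact Finset.sum_congr rfl fun i _ => by rw [Finset.mul_sum]
    rw [h4, h3] at h2
    linarith
  -- kernel is trivial
  have hker : ∀ v : Fin n → ℝ, M.mulVec v = 0 → v = 0 := by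
    intro v hv
    have hvi : ∀ i, v i = α * ∑ j, Smat A i j * v j := by
      intro i
      have h0 : M.mulVec v i = 0 := by rw [hv]; rfl
      simp only [hM_def, Matrix.mulVec, dotProduct, Matrix.sub_apply, Matrix.smul_apply,
        Matrix.one_apply, smul_eq_mul, sub_mul, ite_mul, one_mul, zero_mul,
        Finset.sum_sub_distrib, Finset.sum_ite_eq, Finset.mem_univ, if_true] at h0
      have : ∑ j, α * Smat A i j * v j = α * ∑ j, Smat A i j * v j := by
        rw [Finset.mul_sum]
        exact Finset.sum_congr rfl fun j _ => by ring
      linarith [h0, this]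
    have hsum : ∑ i, v i * v i = α * ∑ i, ∑ j, Smat A i j * (v i * v j) := by
      have : ∀ i, v i * v i = α * ∑ j, Smat A i j * (v i * v j) := by
        intro i
        nth_rewrite 2 [hvi i]
        rw [Finset.mul_sum, Finset.mul_sum, Finset.mul_sum]
        exact Finset.sum_congr rfl fun j _ => by ring
      rw [Finset.sum_congr rfl fun i _ => this i, ← Finset.mul_sum]
    have hnn : (0:ℝ) ≤ ∑ i, v i * v i := Finset.sum_nonneg fun i _ => mul_self_nonneg _
    have hle : α * (∑ i, ∑ j, Smat A i j * (v i * v j)) ≤ α * ∑ i, v i * v i :=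
      mul_le_mul_of_nonneg_left (hSbound v) hα0.le
    have hle2 : ∑ i, v i * v i ≤ α * ∑ i, v i * v i := le_trans (le_of_eq hsum) hle
    have hzero : ∑ i, v i * v i = 0 := by nlinarith [hα1, hnn, hle2]
    funext i
    have := (Finset.sum_eq_zero_iff_of_nonneg (fun i _ => mul_self_nonneg (v i))).mp hzero i
      (Finset.mem_univ i)
    exact mul_self_eq_zero.mp this
  have hdet : IsUnit M.det := by
    rw [isUnit_iff_ne_zero]
    intro h
    obtain ⟨v, hv0, hv⟩ := (Matrix.exists_mulVec_eq_zero_iff).mpr h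
    exact hv0 (hker v hv)
  have hMinv : M * M⁻¹ = 1 := Matrix.mul_nonsing_inv M hdet
  set F' : Matrix (Fin n) (Fin K) ℝ := M⁻¹ * Ymat l y with hF'_def
  have hMF' : M * F' = Ymat l y := by rw [hF'_def, ← Matrix.mul_assoc, hMinv, Matrix.one_mul]
  have hF'app : ∀ i c, F' i c - α * ∑ j, Smat A i j * F' j c = Ymat l y i c := by
    intro i c
    have h0 : (M * F') i c = Ymat l y i c := by rw [hMF']
    rw [Matrix.mul_apply] at h0
    simp only [hM_def, Matrix.sub_apply, Matrix.smul_apply, Matrix.one_apply, smul_eq_mul,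
      sub_mul, ite_mul, one_mul, zero_mul, Finset.sum_sub_distrib, Finset.sum_ite_eq,
      Finset.mem_univ, if_true] at h0
    have : ∑ j, α * Smat A i j * F' j c = α * ∑ j, Smat A i j * F' j c := by
      rw [Finset.mul_sum]
      exact Finset.sum_congr rfl fun j _ => by ring
    linarith [h0, this]
  have h2lam : (1:ℝ) + 2*lam ≠ 0 := by linarith
  have hF₀app : ∀ i c, F' i c = (1 + 2*lam) * F₀ i c := by
    intro i c
    rw [hF₀]
    simp only [Matrix.smul_apply, smul_eq_mul]
    field_simp
  have hstat : ∀ i c,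
      (F₀ i c - Ymat l y i c) + 2*lam * (F₀ i c - ∑ j, Smat A i j * F₀ j c) = 0 := by
    intro i c
    have h1 := hF'app i c
    have h2 : ∑ j, Smat A i j * F' j c = (1+2*lam) * ∑ j, Smat A i j * F₀ j c := by
      rw [Finset.mul_sum]
      exact Finset.sum_congr rfl fun j _ => by rw [hF₀app]; ring
    rw [hF₀app, h2] at h1
    have hα2 : α * (1+2*lam) = 2*lam := by
      rw [hαdef]
      field_simp
      ring
    have h3 : α * ((1+2*lam) * ∑ j, Smat A i j * F₀ j c)
        = 2*lam * ∑ j, Smat A i j * F₀ j c := by rw [← mul_assoc, hα2]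
    rw [h3] at h1
    linarith
  constructor
  · -- uniqueness of minimizer
    intro F hF
    have key : Q F = Q F₀ + ((∑ i, ∑ c, (F i c - F₀ i c)^2)
        + lam * ∑ i, ∑ j, A i j * ∑ c, ((F i c - F₀ i c) / Real.sqrt (rowSum A i)
            - (F j c - F₀ j c) / Real.sqrt (rowSum A j))^2) := by
      have hA1 : ∑ i, ∑ c, (F i c - Ymat l y i c)^2
          = (∑ i, ∑ c, (F₀ i c - Ymat l y i c)^2) + ((∑ i, ∑ c, (F i c - F₀ i c)^2)
            + ∑ i, ∑ c, 2*((F i c - F₀ i c) * (F₀ i c - Ymat l y i c))) := by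
        have hpt : ∀ (i : Fin n) (c : Fin K), (F i c - Ymat l y i c)^2
            = (F₀ i c - Ymat l y i c)^2 + ((F i c - F₀ i c)^2
              + 2*((F i c - F₀ i c) * (F₀ i c - Ymat l y i c))) := fun i c => by ring
        simp only [hpt, Finset.sum_add_distrib]
      have hB1 : ∑ i, ∑ j, A i j * ∑ c, (F i c / Real.sqrt (rowSum A i)
            - F j c / Real.sqrt (rowSum A j))^2
          = (∑ i, ∑ j, A i j * ∑ c, (F₀ i c / Real.sqrt (rowSum A i)
              - F₀ j c / Real.sqrt (rowSum A j))^2)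
            + ((∑ i, ∑ j, A i j * ∑ c, ((F i c - F₀ i c) / Real.sqrt (rowSum A i)
                - (F j c - F₀ j c) / Real.sqrt (rowSum A j))^2)
              + ∑ i, ∑ j, A i j * ∑ c, 2*(((F i c - F₀ i c) / Real.sqrt (rowSum A i)
                  - (F j c - F₀ j c) / Real.sqrt (rowSum A j))
                * (F₀ i c / Real.sqrt (rowSum A i) - F₀ j c / Real.sqrt (rowSum A j)))) := by
        have hpt : ∀ (i j : Fin n) (c : Fin K),
            (F i c / Real.sqrt (rowSum A i) - F j c / Real.sqrt (rowSum A j))^2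
            = (F₀ i c / Real.sqrt (rowSum A i) - F₀ j c / Real.sqrt (rowSum A j))^2
              + (((F i c - F₀ i c) / Real.sqrt (rowSum A i)
                  - (F j c - F₀ j c) / Real.sqrt (rowSum A j))^2
                + 2*(((F i c - F₀ i c) / Real.sqrt (rowSum A i)
                    - (F j c - F₀ j c) / Real.sqrt (rowSum A j))
                  * (F₀ i c / Real.sqrt (rowSum A i) - F₀ j c / Real.sqrt (rowSum A j)))) := by
          intro i j c
          rw [sub_div, sub_div]
          ring
        simp only [hpt, Finset.sum_add_distrib, mul_add]
      have hC1 : ∑ i, ∑ j, A i j * ∑ c, 2*(((F i c - F₀ i c) / Real.sqrt (rowSum A i)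
              - (F j c - F₀ j c) / Real.sqrt (rowSum A j))
            * (F₀ i c / Real.sqrt (rowSum A i) - F₀ j c / Real.sqrt (rowSum A j)))
          = ∑ i, ∑ c, 4*((F i c - F₀ i c) * (F₀ i c - ∑ j, Smat A i j * F₀ j c)) :=
        symmetrize_aux A hAs (fun i => Real.sqrt (rowSum A i)) hsne hss
          (fun i c => F i c - F₀ i c) F₀ (Smat A) hSapp
      have hzero : (∑ i, ∑ c, 2*((F i c - F₀ i c) * (F₀ i c - Ymat l y i c)))
          + lam * ∑ i, ∑ c, 4*((F i c - F₀ i c) * (F₀ i c - ∑ j, Smat A i j * F₀ j c)) = 0 := by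
        have hlamin : lam * ∑ i, ∑ c, 4*((F i c - F₀ i c) * (F₀ i c - ∑ j, Smat A i j * F₀ j c))
            = ∑ i, ∑ c, lam * (4*((F i c - F₀ i c) * (F₀ i c - ∑ j, Smat A i j * F₀ j c))) := by
          rw [Finset.mul_sum]
          exact Finset.sum_congr rfl fun i _ => by rw [Finset.mul_sum]
        rw [hlamin, ← Finset.sum_add_distrib]
        refine Finset.sum_eq_zero fun i _ => ?_
        rw [← Finset.sum_add_distrib]
        refine Finset.sum_eq_zero fun c _ => ?_
        have h := hstat i c
        linear_combination (2*(F i c - F₀ i c)) * h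
      rw [hQ F, hQ F₀, hA1, hB1, hC1]
      linear_combination hzero
    have hex : ∃ i c, F i c ≠ F₀ i c := by
      by_contra h
      push_neg at h
      exact hF (by funext i c; exact h i c)
    obtain ⟨i, c, hic⟩ := hex
    have hpos1 : 0 < ∑ i, ∑ c, (F i c - F₀ i c)^2 := by
      have h1 : 0 < (F i c - F₀ i c)^2 := pow_two_pos_of_ne_zero (sub_ne_zero.mpr hic)
      have h2 : (F i c - F₀ i c)^2 ≤ ∑ c', (F i c' - F₀ i c')^2 :=
        Finset.single_le_sum (f := fun c' => (F i c' - F₀ i c')^2)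
          (fun c' _ => sq_nonneg _) (Finset.mem_univ c)
      have h3 : ∑ c', (F i c' - F₀ i c')^2 ≤ ∑ i', ∑ c', (F i' c' - F₀ i' c')^2 :=
        Finset.single_le_sum (f := fun i' => ∑ c', (F i' c' - F₀ i' c')^2)
          (fun i' _ => Finset.sum_nonneg fun c' _ => sq_nonneg _) (Finset.mem_univ i)
      linarith
    have hpos2 : 0 ≤ lam * ∑ i, ∑ j, A i j * ∑ c, ((F i c - F₀ i c) / Real.sqrt (rowSum A i)
        - (F j c - F₀ j c) / Real.sqrt (rowSum A j))^2 :=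
      mul_nonneg hlam.le (Finset.sum_nonneg fun i _ => Finset.sum_nonneg fun j _ =>
        mul_nonneg (hnonneg i j) (Finset.sum_nonneg fun c _ => sq_nonneg _))
    rw [key]
    linarith
  · -- order preservation
    intro i c c'
    have hcoef : (0:ℝ) < 1 / (1 + 2 * lam) := div_pos one_pos (by linarith)
    rw [hF₀]
    simp only [Matrix.smul_apply, smul_eq_mul]
    exact mul_lt_mul_iff_right₀ hcoef
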